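/- arXiv:math/9909118 — 4 statements merged into one kernel-verified Lean document; each statement's English description precedes it below -/
import Mathlib

section
/- For any integer r ≥ 1 and any indeterminates z_1,...,z_r, the antisymmetrization identity holds: ∑_{σ ∈ S_r} (-1)^{l(σ)} ∏_{k<s} (z_{σ(k)} - q^{-2} z_{σ(s)}) = q^{-r(r-1)/2} [r]!_q ∏_{k<s} (z_k - z_s), where [r]!_q = ∏_{m=1}^r (q^m - q^{-m})/(q - q^{-1}) and l(σ) denotes the length (number of inversions) of the permutation σ. -/
open MvPolynomial Finset

/-- The field ℚ(q) of rational functions. -/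
noncomputable abbrev K0 : Type := RatFunc ℚ

noncomputable def q0 : K0 := RatFunc.X

/-- The q-integer [m] = (q^m - q^{-m})/(q - q^{-1}). -/
noncomputable def qInt0 (m : ℕ) : K0 := (q0 ^ m - q0⁻¹ ^ m) / (q0 - q0⁻¹)

/-- The q-factorial [r]! = [r][r-1]⋯[1]. -/
noncomputable def qFact0 (r : ℕ) : K0 := ∏ m ∈ Finset.Icc 1 r, qInt0 m

/-- The number of inversions (length) of a permutation. -/
def inv0 {r : ℕ} (σ : Equiv.Perm (Fin r)) : ℕ :=
  (Finset.univ.filter (fun p : Fin r × Fin r => p.1 < p.2 ∧ σ p.2 < σ p.1)).card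

-- § sign vs inversions

lemma aux_signAux3_eq_signAux {n : ℕ} (f : Equiv.Perm (Fin n)) (s : Multiset (Fin n))
    (hs : ∀ x, x ∈ s) : Equiv.Perm.signAux3 f hs = Equiv.Perm.signAux f := by
  induction s using Quotient.inductionOn with
  | h l =>
    rw [show Equiv.Perm.signAux3 f hs = Equiv.Perm.signAux2 l f from rfl,
      ← Equiv.Perm.signAux_eq_signAux2 l f (Equiv.refl _) (fun y _ => hs y)]
    congr 1

lemma aux_sign_eq_signAux {n : ℕ} (f : Equiv.Perm (Fin n)) :
    Equiv.Perm.sign f = Equiv.Perm.signAux f := by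
  have h := aux_signAux3_eq_signAux f Finset.univ.val Finset.mem_univ
  exact h

lemma aux_sign_eq_pow_inv0 {n : ℕ} (f : Equiv.Perm (Fin n)) :
    Equiv.Perm.sign f = (-1 : ℤˣ) ^ inv0 f := by
  rw [aux_sign_eq_signAux]
  unfold Equiv.Perm.signAux
  rw [Finset.prod_ite, Finset.prod_const, Finset.prod_const, one_pow, mul_one]
  congr 1
  unfold inv0
  apply Finset.card_bij (fun (x : Σ _ : Fin n, Fin n) _ => ((x.2, x.1) : Fin n × Fin n))
  · rintro ⟨x1, x2⟩ hx
    rw [Finset.mem_filter] at hx ⊢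
    obtain ⟨hmem, hle⟩ := hx
    rw [Equiv.Perm.mem_finPairsLT] at hmem
    refine ⟨Finset.mem_univ _, hmem, lt_of_le_of_ne hle ?_⟩
    simp only []
    intro h
    exact absurd (f.injective h) (ne_of_gt hmem)
  · rintro ⟨x1, x2⟩ hx ⟨y1, y2⟩ hy h
    simp only [Prod.mk.injEq] at h
    obtain ⟨h1, h2⟩ := h
    subst h1; subst h2; rfl
  · rintro ⟨p1, p2⟩ hp
    rw [Finset.mem_filter] at hp
    obtain ⟨-, hlt, hflt⟩ := hp
    refine ⟨⟨p2, p1⟩, ?_, rfl⟩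
    rw [Finset.mem_filter, Equiv.Perm.mem_finPairsLT]
    exact ⟨hlt, le_of_lt hflt⟩

lemma aux_neg_one_pow_inv0 {n : ℕ} {A : Type*} [CommRing A] (f : Equiv.Perm (Fin n)) :
    ((Equiv.Perm.sign f : ℤ) : A) = (-1 : A) ^ inv0 f := by
  rw [aux_sign_eq_pow_inv0]
  push_cast
  rfl

-- § product helpers

section ProdHelpers

variable {A : Type*} [CommRing A]

lemma aux_filter_lt_eq_Ioi {m : ℕ} (k : Fin m) :
    Finset.univ.filter (fun s => k < s) = Finset.Ioi k := by
  ext s; simp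

lemma aux_prod_Ioi_split {M : Type*} [CommMonoid M] {n : ℕ} (g : Fin (n+1) → Fin (n+1) → M) :
    ∏ k : Fin (n+1), ∏ s ∈ Finset.Ioi k, g k s =
      (∏ j : Fin n, g 0 j.succ) *
        ∏ i : Fin n, ∏ j ∈ Finset.Ioi i, g i.succ j.succ := by
  rw [Fin.prod_univ_succ]
  congr 1
  · exact Fin.prod_Ioi_zero _
  · exact Finset.prod_congr rfl fun i _ => Fin.prod_Ioi_succ _ i

lemma aux_prod_pairs_neg {m : ℕ} (v : Fin m → A) :
    ∏ k : Fin m, ∏ s ∈ Finset.Ioi k, (v k - v s) =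
      (∏ k : Fin m, ∏ s ∈ Finset.Ioi k, (-1 : A)) * Matrix.det (Matrix.vandermonde v) := by
  rw [Matrix.det_vandermonde, ← Finset.prod_mul_distrib]
  refine Finset.prod_congr rfl fun k _ => ?_
  rw [← Finset.prod_mul_distrib]
  refine Finset.prod_congr rfl fun s _ => ?_
  ring

lemma aux_vandermonde_comp {m : ℕ} (v : Fin m → A) (ρ : Equiv.Perm (Fin m)) :
    Matrix.vandermonde (fun i => v (ρ i)) = (Matrix.vandermonde v).submatrix ρ id := by
  ext i j
  simp [Matrix.vandermonde_apply, Matrix.submatrix_apply]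

lemma aux_prod_pairs_perm {m : ℕ} (v : Fin m → A) (ρ : Equiv.Perm (Fin m)) :
    ∏ k : Fin m, ∏ s ∈ Finset.Ioi k, (v (ρ k) - v (ρ s)) =
      ((Equiv.Perm.sign ρ : ℤ) : A) * ∏ k : Fin m, ∏ s ∈ Finset.Ioi k, (v k - v s) := by
  have h1 := aux_prod_pairs_neg (fun i => v (ρ i))
  have h2 : Matrix.det (Matrix.vandermonde (fun i => v (ρ i)))
      = ((Equiv.Perm.sign ρ : ℤ) : A) * Matrix.det (Matrix.vandermonde v) := by
    rw [aux_vandermonde_comp, Matrix.det_permute]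
  rw [h1, h2, aux_prod_pairs_neg v]
  ring

-- § the D-lemma (cofactor expansion)

lemma aux_D_lemma {n : ℕ} (v : Fin (n+1) → A) (m : ℕ) (hm : m ≤ n) :
    ∑ a : Fin (n+1), (-1 : A) ^ (a : ℕ) * v a ^ m *
        ∏ i : Fin n, ∏ j ∈ Finset.Ioi i, (v (a.succAbove i) - v (a.succAbove j)) =
      if m = n then ∏ k : Fin (n+1), ∏ s ∈ Finset.Ioi k, (v k - v s) else 0 := by
  set M : Matrix (Fin (n+1)) (Fin (n+1)) A :=
    Matrix.of (fun i j => if j = Fin.last n then v i ^ m else v i ^ (j : ℕ)) with hM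
  have hsub : ∀ a : Fin (n+1),
      M.submatrix a.succAbove (Fin.last n).succAbove
        = Matrix.vandermonde (fun i => v (a.succAbove i)) := by
    intro a
    ext i j
    simp [hM, Fin.succAbove_last, (Fin.castSucc_lt_last j).ne, Matrix.vandermonde_apply]
  have hdet := Matrix.det_succ_column M (Fin.last n)
  have hMlast : ∀ a : Fin (n+1), M a (Fin.last n) = v a ^ m := by
    intro a; rw [hM]; simp
  have hsum : ∑ a : Fin (n+1), (-1 : A) ^ (a : ℕ) * v a ^ m *
      ∏ i : Fin n, ∏ j ∈ Finset.Ioi i, (v (a.succAbove i) - v (a.succAbove j))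
      = (∏ i : Fin n, ∏ j ∈ Finset.Ioi i, (-1 : A)) * ((-1 : A) ^ n * M.det) := by
    rw [hdet, Finset.mul_sum, Finset.mul_sum]
    refine Finset.sum_congr rfl fun a _ => ?_
    rw [aux_prod_pairs_neg (fun i => v (a.succAbove i)), hsub a, hMlast a, Fin.val_last,
      pow_add]
    have h1 : ((-1 : A)) ^ (n * 2) = 1 := by rw [mul_comm, pow_mul, neg_one_sq, one_pow]
    ring_nf
    rw [h1, mul_one]
  rw [hsum]
  by_cases hmn : m = n
  · subst hmn
    rw [if_pos rfl]
    have hMv : M = Matrix.vandermonde v := by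
      ext i j
      rw [hM]
      simp only [Matrix.of_apply, Matrix.vandermonde_apply]
      split
      · next h => rw [h, Fin.val_last]
      · rfl
    rw [hMv, aux_prod_pairs_neg v, aux_prod_Ioi_split (fun _ _ => (-1 : A))]
    rw [Finset.prod_const, Finset.card_univ, Fintype.card_fin]
    ring
  · rw [if_neg hmn]
    have hmlt : m < n := lt_of_le_of_ne hm hmn
    have : M.det = 0 := by
      have h1 : (⟨m, by omega⟩ : Fin (n+1)) ≠ Fin.last n := by
        intro h
        have := congrArg Fin.val h
        simp [Fin.val_last] at this
        omega
      apply Matrix.det_zero_of_column_eq (i := (⟨m, by omega⟩ : Fin (n+1))) (j := Fin.last n) h1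
      intro k
      simp [hM, h1]
    rw [this]
    ring

end ProdHelpers

-- § Vieta expansion

section Vieta

variable {R : Type*} [CommRing R]

lemma aux_vieta {N : ℕ} (t' : R) (y : MvPolynomial (Fin N) R) :
    ∏ b : Fin N, (y - C t' * X b) =
      ∑ j ∈ Finset.range (N + 1), (-1 : MvPolynomial (Fin N) R) ^ j * C (t' ^ j) *
        MvPolynomial.esymm (Fin N) R j * y ^ (N - j) := by
  classical
  set s : Multiset (MvPolynomial (Fin N) R) :=
    Finset.univ.val.map (fun b : Fin N => -(C t' * X b)) with hs
  have hcard : Multiset.card s = N := by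
    rw [hs, Multiset.card_map, ← Finset.card_def, Finset.card_univ, Fintype.card_fin]
  have h := Multiset.prod_X_add_C_eq_sum_esymm s
  have h2 := congrArg (Polynomial.eval y) h
  rw [Polynomial.eval_multiset_prod] at h2
  rw [Multiset.map_map] at h2
  simp only [Function.comp, Polynomial.eval_add, Polynomial.eval_X, Polynomial.eval_C] at h2
  rw [hs, Multiset.map_map] at h2
  have hL : (Multiset.map ((fun r => y + r) ∘ fun b : Fin N => -(C t' * X b))
      Finset.univ.val).prod = ∏ b : Fin N, (y - C t' * X b) := by
    rw [← Finset.prod_eq_multiset_prod]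
    refine Finset.prod_congr rfl fun b _ => ?_
    simp [sub_eq_add_neg]
  rw [hL] at h2
  rw [Polynomial.eval_finset_sum] at h2
  simp only [Polynomial.eval_mul, Polynomial.eval_pow, Polynomial.eval_C,
    Polynomial.eval_X] at h2
  rw [hcard] at h2
  rw [h2]
  refine Finset.sum_congr rfl fun j hj => ?_
  have hesymm : Multiset.esymm s j
      = (-1 : MvPolynomial (Fin N) R) ^ j * C (t' ^ j) * MvPolynomial.esymm (Fin N) R j := by
    rw [hs, Finset.esymm_map_val]
    have : ∀ T ∈ Finset.powersetCard j (Finset.univ : Finset (Fin N)),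
        (∏ b ∈ T, -(C t' * X b))
          = (-1 : MvPolynomial (Fin N) R) ^ j * C (t' ^ j) * ∏ b ∈ T, X b := by
      intro T hT
      have hTcard : T.card = j := (Finset.mem_powersetCard.mp hT).2
      calc ∏ b ∈ T, -(C t' * X b) = ∏ b ∈ T, ((-(C t' : MvPolynomial (Fin N) R)) * X b) := by
            refine Finset.prod_congr rfl fun b _ => by ring
        _ = (∏ _b ∈ T, (-(C t' : MvPolynomial (Fin N) R))) * ∏ b ∈ T, X b :=
            Finset.prod_mul_distrib
        _ = (-1 : MvPolynomial (Fin N) R) ^ j * C (t' ^ j) * ∏ b ∈ T, X b := by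
            rw [Finset.prod_const, hTcard]
            rw [show (-(C t' : MvPolynomial (Fin N) R)) ^ j
                = (-1 : MvPolynomial (Fin N) R) ^ j * C (t' ^ j) by rw [neg_pow, map_pow]]
    rw [Finset.sum_congr rfl this, ← Finset.mul_sum]
    rfl
  rw [hesymm]

end Vieta

-- § K1 : the magic expansion

section K1

variable {R : Type*} [CommRing R] [IsDomain R]

lemma aux_K1 {n : ℕ} (t : R) (ht : t ≠ 1) (a : Fin (n+1)) :
    ∏ j : Fin n, (X a - C t * X (a.succAbove j)) =
      ∑ k ∈ Finset.range (n + 1),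
        C ((-1 : R) ^ k * t ^ k * ∑ i ∈ Finset.range (n + 1 - k), t ^ i) *
          MvPolynomial.esymm (Fin (n+1)) R k * X a ^ (n - k) := by
  have hC : (C (1 - t) : MvPolynomial (Fin (n+1)) R) ≠ 0 := by
    rw [Ne, MvPolynomial.C_eq_zero, sub_eq_zero]
    exact fun h => ht h.symm
  have hreg : (C (1 - t) * X a : MvPolynomial (Fin (n+1)) R) ≠ 0 :=
    mul_ne_zero hC (MvPolynomial.X_ne_zero a)
  apply mul_left_cancel₀ hreg
  -- LHS
  have hL : C (1 - t) * X a * ∏ j : Fin n, (X a - C t * X (a.succAbove j))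
      = ∏ b : Fin (n+1), (X a - C t * X b) := by
    rw [Fin.prod_univ_succAbove (fun b => (X a - C t * X b : MvPolynomial (Fin (n+1)) R)) a]
    rw [map_sub, C_1]
    ring
  rw [hL, aux_vieta t (X a : MvPolynomial (Fin (n+1)) R)]
  -- the t' = 1 instance
  have hB0 : (0 : MvPolynomial (Fin (n+1)) R) =
      ∑ j ∈ Finset.range (n + 1 + 1), (-1 : MvPolynomial (Fin (n+1)) R) ^ j * C ((1:R) ^ j) *
        MvPolynomial.esymm (Fin (n+1)) R j * X a ^ (n + 1 - j) := by
    rw [← aux_vieta (1 : R) (X a : MvPolynomial (Fin (n+1)) R)]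
    rw [eq_comm]
    apply Finset.prod_eq_zero (Finset.mem_univ a)
    simp
  -- abbreviations
  -- RHS transformation, term by term
  have hR : C (1 - t) * X a * (∑ k ∈ Finset.range (n + 1),
        C ((-1 : R) ^ k * t ^ k * ∑ i ∈ Finset.range (n + 1 - k), t ^ i) *
          MvPolynomial.esymm (Fin (n+1)) R k * X a ^ (n - k))
      = (∑ k ∈ Finset.range (n + 1), (-1 : MvPolynomial (Fin (n+1)) R) ^ k * C (t ^ k) *
            MvPolynomial.esymm (Fin (n+1)) R k * X a ^ (n + 1 - k))
        - C (t ^ (n+1)) * ∑ k ∈ Finset.range (n + 1),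
            (-1 : MvPolynomial (Fin (n+1)) R) ^ k * MvPolynomial.esymm (Fin (n+1)) R k * X a ^ (n + 1 - k) := by
    rw [Finset.mul_sum, Finset.mul_sum, ← Finset.sum_sub_distrib]
    refine Finset.sum_congr rfl fun k hk => ?_
    have hk' : k ≤ n := Nat.lt_succ_iff.mp (Finset.mem_range.mp hk)
    have hcoef : (1 - t) * ((-1 : R) ^ k * t ^ k * ∑ i ∈ Finset.range (n + 1 - k), t ^ i)
        = (-1 : R) ^ k * t ^ k - (-1 : R) ^ k * t ^ (n + 1) := by
      have hg := geom_sum_mul t (n + 1 - k)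
      have hp : t ^ k * t ^ (n + 1 - k) = t ^ (n + 1) := by
        rw [← pow_add]; congr 1; omega
      linear_combination (-((-1 : R) ^ k * t ^ k)) * hg - ((-1 : R) ^ k) * hp
    have hXa : (X a : MvPolynomial (Fin (n+1)) R) * X a ^ (n - k) = X a ^ (n + 1 - k) := by
      rw [← pow_succ']; congr 1; omega
    calc C (1 - t) * X a * (C ((-1 : R) ^ k * t ^ k * ∑ i ∈ Finset.range (n + 1 - k), t ^ i) *
            MvPolynomial.esymm (Fin (n+1)) R k * X a ^ (n - k))
        = C ((1 - t) * ((-1 : R) ^ k * t ^ k * ∑ i ∈ Finset.range (n + 1 - k), t ^ i)) *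
            MvPolynomial.esymm (Fin (n+1)) R k * (X a * X a ^ (n - k)) := by simp only [map_mul]; ring
      _ = C ((-1 : R) ^ k * t ^ k - (-1 : R) ^ k * t ^ (n + 1)) * MvPolynomial.esymm (Fin (n+1)) R k * X a ^ (n + 1 - k) := by
            rw [hcoef, hXa]
      _ = (-1 : MvPolynomial (Fin (n+1)) R) ^ k * C (t ^ k) * MvPolynomial.esymm (Fin (n+1)) R k * X a ^ (n + 1 - k)
            - C (t ^ (n+1)) * ((-1 : MvPolynomial (Fin (n+1)) R) ^ k * MvPolynomial.esymm (Fin (n+1)) R k * X a ^ (n + 1 - k)) := by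
            rw [map_sub, map_mul, map_mul, map_pow, map_pow, map_neg, C_1]
            ring
  rw [hR]
  -- now use hB0
  have hB1 : ∑ k ∈ Finset.range (n + 1), (-1 : MvPolynomial (Fin (n+1)) R) ^ k *
        MvPolynomial.esymm (Fin (n+1)) R k * X a ^ (n + 1 - k)
      = - ((-1 : MvPolynomial (Fin (n+1)) R) ^ (n+1) * MvPolynomial.esymm (Fin (n+1)) R (n+1)) := by
    have h := hB0
    rw [Finset.sum_range_succ] at h
    simp only [one_pow, map_one, mul_one, Nat.sub_self, pow_zero] at h
    linear_combination -h
  rw [Finset.sum_range_succ, hB1]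
  have hpow0 : (n + 1) - (n + 1) = 0 := Nat.sub_self _
  rw [hpow0, pow_zero, mul_one]
  ring
end K1

-- § key lemma

section KeyMain

variable {R : Type*} [CommRing R] [IsDomain R]

lemma aux_keyK {n : ℕ} (t : R) (ht : t ≠ 1) :
    ∑ a : Fin (n+1), (-1 : MvPolynomial (Fin (n+1)) R) ^ (a : ℕ) *
        (∏ j : Fin n, (X a - C t * X (a.succAbove j))) *
        ∏ i : Fin n, ∏ j ∈ Finset.Ioi i, (X (a.succAbove i) - X (a.succAbove j)) =
      C (∑ i ∈ Finset.range (n+1), t ^ i) *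
        ∏ k : Fin (n+1), ∏ s ∈ Finset.Ioi k, (X k - X s) := by
  have h1 : ∀ a : Fin (n+1),
      (-1 : MvPolynomial (Fin (n+1)) R) ^ (a : ℕ) *
        (∏ j : Fin n, (X a - C t * X (a.succAbove j))) *
        ∏ i : Fin n, ∏ j ∈ Finset.Ioi i, (X (a.succAbove i) - X (a.succAbove j))
      = ∑ k ∈ Finset.range (n + 1),
          C ((-1 : R) ^ k * t ^ k * ∑ i ∈ Finset.range (n + 1 - k), t ^ i) *
            MvPolynomial.esymm (Fin (n+1)) R k *
            ((-1 : MvPolynomial (Fin (n+1)) R) ^ (a : ℕ) * X a ^ (n - k) *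
              ∏ i : Fin n, ∏ j ∈ Finset.Ioi i, (X (a.succAbove i) - X (a.succAbove j))) := by
    intro a
    rw [aux_K1 t ht a, Finset.mul_sum, Finset.sum_mul]
    refine Finset.sum_congr rfl fun k _ => ?_
    ring
  rw [Finset.sum_congr rfl (fun a _ => h1 a), Finset.sum_comm]
  have h2 : ∀ k ∈ Finset.range (n+1),
      (∑ a : Fin (n+1),
        C ((-1 : R) ^ k * t ^ k * ∑ i ∈ Finset.range (n + 1 - k), t ^ i) *
          MvPolynomial.esymm (Fin (n+1)) R k *
          ((-1 : MvPolynomial (Fin (n+1)) R) ^ (a : ℕ) * X a ^ (n - k) *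
            ∏ i : Fin n, ∏ j ∈ Finset.Ioi i, (X (a.succAbove i) - X (a.succAbove j))))
      = C ((-1 : R) ^ k * t ^ k * ∑ i ∈ Finset.range (n + 1 - k), t ^ i) *
          MvPolynomial.esymm (Fin (n+1)) R k *
          (if n - k = n then ∏ k' : Fin (n+1), ∏ s ∈ Finset.Ioi k', (X k' - X s) else 0) := by
    intro k hk
    rw [← Finset.mul_sum, ← aux_D_lemma (fun b : Fin (n+1) => (X b : MvPolynomial (Fin (n+1)) R))
      (n - k) (Nat.sub_le n k)]
  rw [Finset.sum_congr rfl h2]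
  rw [Finset.sum_eq_single 0]
  · simp
  · intro k hk hk0
    have : ¬ (n - k = n) := by
      rw [Finset.mem_range] at hk
      omega
    rw [if_neg this, mul_zero]
  · intro h
    simp at h

theorem aux_main (t : R) (ht : t ≠ 1) (n : ℕ) :
    ∑ σ : Equiv.Perm (Fin n), ((Equiv.Perm.sign σ : ℤ) : MvPolynomial (Fin n) R) *
        ∏ k : Fin n, ∏ s ∈ Finset.Ioi k, (X (σ k) - C t * X (σ s)) =
      C (∏ m ∈ Finset.range n, ∑ i ∈ Finset.range (m+1), t ^ i) *
        ∏ k : Fin n, ∏ s ∈ Finset.Ioi k, (X k - X s) := by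
  induction n with
  | zero =>
      haveI : Subsingleton (Equiv.Perm (Fin 0)) :=
        ⟨fun a b => Equiv.ext (fun x => x.elim0)⟩
      rw [Fintype.sum_subsingleton _ (1 : Equiv.Perm (Fin 0))]
      simp
  | succ n ih =>
      have hre := Equiv.sum_comp ((Equiv.Perm.decomposeFin (n := n)).symm)
        (fun σ : Equiv.Perm (Fin (n+1)) =>
          ((Equiv.Perm.sign σ : ℤ) : MvPolynomial (Fin (n+1)) R) *
            ∏ k : Fin (n+1), ∏ s ∈ Finset.Ioi k, (X (σ k) - C t * X (σ s)))
      rw [← hre, Fintype.sum_prod_type]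
      -- per (a, π) term rewriting
      have hterm : ∀ (a : Fin (n+1)) (π : Equiv.Perm (Fin n)),
          ((Equiv.Perm.sign (Equiv.Perm.decomposeFin.symm (a, π)) : ℤ) :
              MvPolynomial (Fin (n+1)) R) *
            ∏ k : Fin (n+1), ∏ s ∈ Finset.Ioi k,
              (X (Equiv.Perm.decomposeFin.symm (a, π) k) -
                C t * X (Equiv.Perm.decomposeFin.symm (a, π) s))
          = ((if a = 0 then (1:ℤ) else -1) : MvPolynomial (Fin (n+1)) R) *
              (∏ j : Fin n, (X a - C t * X (Equiv.swap 0 a j.succ))) *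
              (MvPolynomial.rename (fun j : Fin n => Equiv.swap 0 a j.succ)
                (((Equiv.Perm.sign π : ℤ) : MvPolynomial (Fin n) R) *
                  ∏ i : Fin n, ∏ j ∈ Finset.Ioi i, (X (π i) - C t * X (π j)))) := by
        intro a π
        rw [aux_prod_Ioi_split (fun k s =>
          (X (Equiv.Perm.decomposeFin.symm (a, π) k) -
            C t * X (Equiv.Perm.decomposeFin.symm (a, π) s) : MvPolynomial (Fin (n+1)) R))]
        simp only [Equiv.Perm.decomposeFin_symm_apply_zero,
          Equiv.Perm.decomposeFin_symm_apply_succ]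
        rw [Equiv.Perm.decomposeFin.symm_sign]
        have hp1 : ∏ j : Fin n,
            (X a - C t * X (Equiv.swap 0 a (π j).succ) : MvPolynomial (Fin (n+1)) R)
            = ∏ j : Fin n, (X a - C t * X (Equiv.swap 0 a j.succ)) := by
          exact Equiv.prod_comp π (fun j => X a - C t * X (Equiv.swap 0 a j.succ))
        have hp2 : (MvPolynomial.rename (fun j : Fin n => Equiv.swap 0 a j.succ)
              (∏ i : Fin n, ∏ j ∈ Finset.Ioi i,
                (X (π i) - C t * X (π j) : MvPolynomial (Fin n) R)))
            = ∏ i : Fin n, ∏ j ∈ Finset.Ioi i,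
                (X (Equiv.swap 0 a (π i).succ) - C t * X (Equiv.swap 0 a (π j).succ)) := by
          simp only [map_prod, map_sub, map_mul, rename_X, rename_C]
        rw [map_mul, hp1, hp2]
        have hcast : (((if a = 0 then (1:ℤˣ) else -1) * Equiv.Perm.sign π : ℤˣ) : ℤ)
            = (if a = 0 then (1:ℤ) else -1) * ((Equiv.Perm.sign π : ℤ)) := by
          split_ifs <;> simp
        rw [hcast]
        have hrc : (MvPolynomial.rename (fun j : Fin n => Equiv.swap 0 a j.succ))
              (((Equiv.Perm.sign π : ℤ) : MvPolynomial (Fin n) R))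
            = ((Equiv.Perm.sign π : ℤ) : MvPolynomial (Fin (n+1)) R) := by
          rw [map_intCast]
        rw [hrc]
        push_cast
        ring
      rw [Finset.sum_congr rfl (fun a _ =>
        Finset.sum_congr rfl (fun π _ => hterm a π))]
      -- sum over π collapses via ih
      have hinner : ∀ a : Fin (n+1),
          (∑ π : Equiv.Perm (Fin n),
            ((if a = 0 then (1:ℤ) else -1) : MvPolynomial (Fin (n+1)) R) *
              (∏ j : Fin n, (X a - C t * X (Equiv.swap 0 a j.succ))) *
              (MvPolynomial.rename (fun j : Fin n => Equiv.swap 0 a j.succ)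
                (((Equiv.Perm.sign π : ℤ) : MvPolynomial (Fin n) R) *
                  ∏ i : Fin n, ∏ j ∈ Finset.Ioi i, (X (π i) - C t * X (π j)))))
          = C (∏ m ∈ Finset.range n, ∑ i ∈ Finset.range (m+1), t ^ i) *
              ((-1 : MvPolynomial (Fin (n+1)) R) ^ (a : ℕ) *
                (∏ j : Fin n, (X a - C t * X (a.succAbove j))) *
                ∏ i : Fin n, ∏ j ∈ Finset.Ioi i,
                  (X (a.succAbove i) - X (a.succAbove j))) := by
        intro a
        rw [← Finset.mul_sum, ← map_sum, ih]
        rw [map_mul, rename_C]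
        have hp3 : (MvPolynomial.rename (fun j : Fin n => Equiv.swap 0 a j.succ))
              (∏ k : Fin n, ∏ s ∈ Finset.Ioi k, (X k - X s : MvPolynomial (Fin n) R))
            = ∏ k : Fin n, ∏ s ∈ Finset.Ioi k,
                (X (Equiv.swap 0 a k.succ) - X (Equiv.swap 0 a s.succ)) := by
          simp only [map_prod, map_sub, rename_X]
        rw [hp3]
        -- now case on a
        induction a using Fin.cases with
        | zero =>
            simp only [if_pos rfl, Equiv.swap_self, Equiv.refl_apply, Fin.succAbove_zero,
              Fin.val_zero, pow_zero]
            push_cast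
            ring
        | succ i =>
            simp only [if_neg (Fin.succ_ne_zero i)]
            simp only [← Fin.succAbove_cycleRange]
            have e1 : ∏ j : Fin n,
                (X i.succ - C t * X (i.succ.succAbove (i.cycleRange j)) :
                  MvPolynomial (Fin (n+1)) R)
                = ∏ j : Fin n, (X i.succ - C t * X (i.succ.succAbove j)) :=
              Equiv.prod_comp i.cycleRange
                (fun j => X i.succ - C t * X (i.succ.succAbove j))
            have e2 := aux_prod_pairs_perm
              (fun j : Fin n => (X (i.succ.succAbove j) : MvPolynomial (Fin (n+1)) R))
              i.cycleRange
            rw [e1, e2, Fin.sign_cycleRange]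
            push_cast
            rw [Fin.val_succ, pow_succ]
            ring
      rw [Finset.sum_congr rfl (fun a _ => hinner a), ← Finset.mul_sum,
        aux_keyK t ht, Finset.prod_range_succ, map_mul]
      ring

end KeyMain

-- § specialization to K0

lemma aux_q0_ne_zero : (q0 : K0) ≠ 0 := by
  rw [q0]; exact RatFunc.X_ne_zero

lemma aux_q0_sq_ne_one : (q0 : K0) ^ 2 ≠ 1 := by
  rw [q0, ← RatFunc.algebraMap_X, ← map_pow, ← map_one (algebraMap (Polynomial ℚ) (RatFunc ℚ))]
  intro h
  have h2 := RatFunc.algebraMap_injective (K := ℚ) h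
  have h3 := congrArg Polynomial.natDegree h2
  rw [Polynomial.natDegree_X_pow, Polynomial.natDegree_one] at h3
  exact two_ne_zero h3

lemma aux_t_ne_one : ((q0 : K0)⁻¹ ^ 2) ≠ 1 := by
  intro h
  rw [inv_pow, inv_eq_one] at h
  exact aux_q0_sq_ne_one h

lemma aux_qsub_ne_zero : (q0 : K0) - q0⁻¹ ≠ 0 := by
  intro h
  apply aux_q0_sq_ne_one
  have h1 : (q0 : K0) = q0⁻¹ := sub_eq_zero.mp h
  calc (q0 : K0) ^ 2 = q0 * q0 := sq q0
    _ = q0 * q0⁻¹ := by rw [← h1]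
    _ = 1 := mul_inv_cancel₀ aux_q0_ne_zero

lemma aux_geom (r : ℕ) :
    ∑ i ∈ Finset.range (r+1), ((q0 : K0)⁻¹ ^ 2) ^ i = q0⁻¹ ^ r * qInt0 (r+1) := by
  have hq := aux_q0_ne_zero
  have hne := aux_qsub_ne_zero
  have hqq : (q0 : K0) * q0⁻¹ = 1 := mul_inv_cancel₀ hq
  have hp : ∀ k : ℕ, (q0 : K0) ^ k * q0⁻¹ ^ k = 1 := fun k => by
    rw [← mul_pow, hqq, one_pow]
  rw [qInt0, mul_div_assoc', eq_div_iff hne]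
  have hg := geom_sum_mul ((q0 : K0)⁻¹ ^ 2) (r+1)
  linear_combination (-q0) * hg +
    ((∑ i ∈ Finset.range (r+1), ((q0 : K0)⁻¹ ^ 2) ^ i) * q0⁻¹) * hqq -
    q0 * (hp r) - (q0⁻¹ ^ (2*r+1)) * hqq

lemma aux_const (r : ℕ) :
    (∏ m ∈ Finset.range r, ∑ i ∈ Finset.range (m+1), ((q0 : K0)⁻¹ ^ 2) ^ i)
      = q0⁻¹ ^ (r * (r-1)/2) * qFact0 r := by
  induction r with
  | zero => simp [qFact0]
  | succ r ih =>
      rw [Finset.prod_range_succ, ih, aux_geom r]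
      have hfact : qFact0 (r+1) = qFact0 r * qInt0 (r+1) := by
        rw [qFact0, qFact0, Finset.prod_Icc_succ_top (Nat.le_add_left 1 r)]
      have hexp : (r+1) * ((r+1) - 1) / 2 = r * (r - 1) / 2 + r := by
        rw [← Nat.choose_two_right, ← Nat.choose_two_right, Nat.choose_succ_succ,
          Nat.choose_one_right]
        exact Nat.add_comm _ _
      rw [hfact, hexp, pow_add]
      ring

theorem statement0 (r : ℕ) (hr : 1 ≤ r) :
    ∑ σ : Equiv.Perm (Fin r),
      (-1 : MvPolynomial (Fin r) K0) ^ inv0 σ *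
        ∏ k : Fin r, ∏ s ∈ Finset.univ.filter (fun s => k < s),
          (X (σ k) - C (q0⁻¹ ^ 2) * X (σ s)) =
    C (q0⁻¹ ^ (r * (r - 1) / 2) * qFact0 r) *
      ∏ k : Fin r, ∏ s ∈ Finset.univ.filter (fun s => k < s), (X k - X s) := by
  have h := aux_main (R := K0) ((q0 : K0)⁻¹ ^ 2) aux_t_ne_one r
  simp_rw [aux_filter_lt_eq_Ioi]
  rw [show (q0⁻¹ ^ (r * (r - 1) / 2) * qFact0 r : K0)
      = ∏ m ∈ Finset.range r, ∑ i ∈ Finset.range (m+1), ((q0 : K0)⁻¹ ^ 2) ^ i from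
    (aux_const r).symm]
  rw [← h]
  refine Finset.sum_congr rfl fun σ _ => ?_
  rw [← aux_neg_one_pow_inv0]
end

section
/- The coefficient of z_1^{r-1} z_2^{r-2} ⋯ z_{r-1}^1 z_r^0 in ∑_{σ ∈ S_r} (-1)^{l(σ)} ∏_{k<s} (z_{σ(k)} - q^{-2} z_{σ(s)}) equals ∑_{σ ∈ S_r} q^{-2 l(σ)} = q^{-r(r-1)/2} [r]!_q. -/
open MvPolynomial Finset

noncomputable abbrev K1 : Type := RatFunc ℚ

noncomputable def q1 : K1 := RatFunc.X

noncomputable def qInt1 (m : ℕ) : K1 := (q1 ^ m - q1⁻¹ ^ m) / (q1 - q1⁻¹)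

noncomputable def qFact1 (r : ℕ) : K1 := ∏ m ∈ Finset.Icc 1 r, qInt1 m

/-- The number of inversions (length) of a permutation. -/
def inv1 {r : ℕ} (σ : Equiv.Perm (Fin r)) : ℕ :=
  (Finset.univ.filter (fun p : Fin r × Fin r => p.1 < p.2 ∧ σ p.2 < σ p.1)).card

def Pairs (r : ℕ) : Finset (Fin r × Fin r) := Finset.univ.filter (fun p => p.1 < p.2)

lemma mem_Pairs {r : ℕ} (p : Fin r × Fin r) : p ∈ Pairs r ↔ p.1 < p.2 := by
  simp [Pairs]

variable {r : ℕ} (σ : Equiv.Perm (Fin r))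

def T0 : Finset (Fin r × Fin r) := (Pairs r).filter (fun p => σ p.1 < σ p.2)

def Ci (i : Fin r) : Finset (Fin r × Fin r) :=
  (Pairs r).filter (fun p => (p.1 = σ.symm i ∧ i < σ p.2) ∨ (p.2 = σ.symm i ∧ i < σ p.1))

lemma mem_Ci {i : Fin r} (p : Fin r × Fin r) :
    p ∈ Ci σ i ↔ p.1 < p.2 ∧ ((p.1 = σ.symm i ∧ i < σ p.2) ∨ (p.2 = σ.symm i ∧ i < σ p.1)) := by
  rw [Ci, mem_filter, mem_Pairs]

lemma card_Ci (i : Fin r) : (Ci σ i).card = r - 1 - (i : ℕ) := by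
  have h : (Ci σ i).card = (Finset.Ioi i).card := by
    apply Finset.card_nbij' (fun p => if p.1 = σ.symm i then σ p.2 else σ p.1)
      (fun j => if σ.symm i < σ.symm j then (σ.symm i, σ.symm j) else (σ.symm j, σ.symm i))
    · intro p hp
      simp only [Finset.mem_coe] at hp ⊢
      rw [mem_Ci] at hp
      obtain ⟨hlt, hcases⟩ := hp
      rw [Finset.mem_Ioi]
      by_cases h1 : p.1 = σ.symm i
      · rw [if_pos h1]
        rcases hcases with ⟨_, h⟩ | ⟨h2, _⟩
        · exact h
        · exact absurd hlt (by rw [h1, h2]; exact lt_irrefl _)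
      · rw [if_neg h1]
        rcases hcases with ⟨h2, _⟩ | ⟨_, h⟩
        · exact absurd h2 h1
        · exact h
    · intro j hj
      simp only [Finset.mem_coe] at hj ⊢
      rw [Finset.mem_Ioi] at hj
      have hne : σ.symm j ≠ σ.symm i := fun h => absurd (σ.symm.injective h) (ne_of_gt hj)
      by_cases h : σ.symm i < σ.symm j
      · rw [if_pos h, mem_Ci]
        exact ⟨h, Or.inl ⟨rfl, by rwa [Equiv.apply_symm_apply]⟩⟩
      · rw [if_neg h, mem_Ci]
        exact ⟨lt_of_le_of_ne (not_lt.mp h) hne, Or.inr ⟨rfl, by rwa [Equiv.apply_symm_apply]⟩⟩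
    · intro p hp
      simp only [Finset.mem_coe] at hp ⊢
      rw [mem_Ci] at hp
      obtain ⟨hlt, hcases⟩ := hp
      by_cases h1 : p.1 = σ.symm i
      · rw [if_pos h1, Equiv.symm_apply_apply, if_pos (h1 ▸ hlt)]
        exact Prod.ext h1.symm rfl
      · have h2 : p.2 = σ.symm i := by
          rcases hcases with ⟨h2, _⟩ | ⟨h2, _⟩
          · exact absurd h2 h1
          · exact h2
        rw [if_neg h1, Equiv.symm_apply_apply, if_neg (not_lt.mpr (le_of_lt (h2 ▸ hlt)))]
        exact Prod.ext rfl h2.symm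
    · intro j hj
      simp only [Finset.mem_coe] at hj ⊢
      rw [Finset.mem_Ioi] at hj
      have hne : σ.symm j ≠ σ.symm i := fun h => absurd (σ.symm.injective h) (ne_of_gt hj)
      by_cases h : σ.symm i < σ.symm j
      · rw [if_pos h, if_pos rfl, Equiv.apply_symm_apply]
      · rw [if_neg h, if_neg hne, Equiv.apply_symm_apply]
  rw [h, Fin.card_Ioi]

lemma classify (T : Finset (Fin r × Fin r)) (hT : T ⊆ Pairs r)
    (hd : ∀ i : Fin r,
      (T.filter (fun p => σ p.1 = i)).card
        + (((Pairs r) \ T).filter (fun p => σ p.2 = i)).card = r - 1 - (i : ℕ)) :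
    ∀ p ∈ Pairs r, (p ∈ T ↔ σ p.1 < σ p.2) := by
  suffices h : ∀ v : ℕ, ∀ i : Fin r, (i : ℕ) = v → ∀ p ∈ Pairs r,
      (σ p.1 = i ∨ σ p.2 = i) → (p ∈ T ↔ σ p.1 < σ p.2) by
    intro p hp
    exact h (σ p.1 : ℕ) (σ p.1) rfl p hp (Or.inl rfl)
  intro v
  induction v using Nat.strong_induction_on with
  | _ v IH =>
  intro i hiv p hp hpi
  have hIH : ∀ j : Fin r, j < i → ∀ p ∈ Pairs r,
      (σ p.1 = j ∨ σ p.2 = j) → (p ∈ T ↔ σ p.1 < σ p.2) :=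
    fun j hj => IH (j : ℕ) (hiv ▸ hj) j rfl
  set A := T.filter (fun p => σ p.1 = i) with hAdef
  set B := ((Pairs r) \ T).filter (fun p => σ p.2 = i) with hBdef
  have hA : A ⊆ Ci σ i := by
    intro p hpA
    rw [hAdef, mem_filter] at hpA
    obtain ⟨hpT, hp1⟩ := hpA
    have hpP : p ∈ Pairs r := hT hpT
    have hlt : p.1 < p.2 := (mem_Pairs p).mp hpP
    have hk : p.1 = σ.symm i := by rw [← hp1, Equiv.symm_apply_apply]
    have hne2 : σ p.2 ≠ i := by
      intro h
      have h21 : p.2 = p.1 := by rw [hk, ← h, Equiv.symm_apply_apply]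
      exact absurd (h21 ▸ hlt) (lt_irrefl _)
    have hgt : i < σ p.2 := by
      rcases lt_trichotomy (σ p.2) i with h | h | h
      · exact absurd ((hIH (σ p.2) h p hpP (Or.inr rfl)).mp hpT)
          (by rw [hp1]; exact not_lt.mpr (le_of_lt h))
      · exact absurd h hne2
      · exact h
    exact (mem_Ci σ p).mpr ⟨hlt, Or.inl ⟨hk, hgt⟩⟩
  have hB : B ⊆ Ci σ i := by
    intro p hpB
    rw [hBdef, mem_filter] at hpB
    obtain ⟨hpS, hp2⟩ := hpB
    rw [Finset.mem_sdiff] at hpS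
    obtain ⟨hpP, hpT⟩ := hpS
    have hlt : p.1 < p.2 := (mem_Pairs p).mp hpP
    have hk : p.2 = σ.symm i := by rw [← hp2, Equiv.symm_apply_apply]
    have hne1 : σ p.1 ≠ i := by
      intro h
      have h21 : p.1 = p.2 := by rw [hk, ← h, Equiv.symm_apply_apply]
      exact absurd (h21 ▸ hlt) (lt_irrefl _)
    have hgt : i < σ p.1 := by
      rcases lt_trichotomy (σ p.1) i with h | h | h
      · exact absurd ((hIH (σ p.1) h p hpP (Or.inl rfl)).mpr
          (by rw [hp2]; exact h)) hpT
      · exact absurd h hne1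
      · exact h
    exact (mem_Ci σ p).mpr ⟨hlt, Or.inr ⟨hk, hgt⟩⟩
  have hdisj : Disjoint A B := by
    rw [Finset.disjoint_left]
    intro p hpA hpB
    rw [hAdef, mem_filter] at hpA
    rw [hBdef, mem_filter, Finset.mem_sdiff] at hpB
    exact hpB.1.2 hpA.1
  have hunion : A ∪ B = Ci σ i := by
    apply Finset.eq_of_subset_of_card_le (Finset.union_subset hA hB)
    rw [Finset.card_union_of_disjoint hdisj, hd i, card_Ci]
  have hlt : p.1 < p.2 := (mem_Pairs p).mp hp
  rcases hpi with h1 | h2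
  · have hk : p.1 = σ.symm i := by rw [← h1, Equiv.symm_apply_apply]
    have hne2 : σ p.2 ≠ i := by
      intro h
      have h21 : p.2 = p.1 := by rw [hk, ← h, Equiv.symm_apply_apply]
      exact absurd (h21 ▸ hlt) (lt_irrefl _)
    rcases lt_trichotomy (σ p.2) i with h | h | h
    · exact hIH (σ p.2) h p hp (Or.inr rfl)
    · exact absurd h hne2
    · have hpC : p ∈ A ∪ B := by
        rw [hunion]
        exact (mem_Ci σ p).mpr ⟨hlt, Or.inl ⟨hk, h⟩⟩
      rcases Finset.mem_union.mp hpC with hA' | hB'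
      · rw [hAdef, mem_filter] at hA'
        exact iff_of_true hA'.1 (by rw [h1]; exact h)
      · rw [hBdef, mem_filter] at hB'
        exact absurd hB'.2 hne2
  · have hk : p.2 = σ.symm i := by rw [← h2, Equiv.symm_apply_apply]
    have hne1 : σ p.1 ≠ i := by
      intro h
      have h21 : p.1 = p.2 := by rw [hk, ← h, Equiv.symm_apply_apply]
      exact absurd (h21 ▸ hlt) (lt_irrefl _)
    rcases lt_trichotomy (σ p.1) i with h | h | h
    · exact hIH (σ p.1) h p hp (Or.inl rfl)
    · exact absurd h hne1
    · have hpC : p ∈ A ∪ B := by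
        rw [hunion]
        exact (mem_Ci σ p).mpr ⟨hlt, Or.inr ⟨hk, h⟩⟩
      rcases Finset.mem_union.mp hpC with hA' | hB'
      · rw [hAdef, mem_filter] at hA'
        exact absurd hA'.2 hne1
      · rw [hBdef, mem_filter, Finset.mem_sdiff] at hB'
        exact iff_of_false hB'.1.2 (by rw [h2]; exact not_lt.mpr (le_of_lt h))

lemma T0_count (i : Fin r) :
    ((T0 σ).filter (fun p => σ p.1 = i)).card
      + (((Pairs r) \ T0 σ).filter (fun p => σ p.2 = i)).card = r - 1 - (i : ℕ) := by
  rw [← card_Ci σ i]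
  rw [← Finset.card_union_of_disjoint (by
    rw [Finset.disjoint_left]
    intro p hpA hpB
    rw [mem_filter] at hpA
    rw [mem_filter, Finset.mem_sdiff] at hpB
    exact hpB.1.2 hpA.1)]
  congr 1
  ext p
  simp only [Finset.mem_union, mem_filter, Finset.mem_sdiff, mem_Ci, T0, mem_Pairs,
    Finset.mem_univ, true_and]
  constructor
  · rintro (⟨⟨hP, hlt⟩, h1⟩ | ⟨⟨hP, hnT⟩, h2⟩)
    · exact ⟨hP, Or.inl ⟨by rw [← h1, Equiv.symm_apply_apply], h1 ▸ hlt⟩⟩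
    · have hlt' : ¬ (σ p.1 < σ p.2) := fun hl => hnT ⟨hP, hl⟩
      have hne : σ p.2 ≠ σ p.1 := fun h => absurd (σ.injective h) (ne_of_gt hP)
      have hgt : σ p.2 < σ p.1 := lt_of_le_of_ne (not_lt.mp hlt') hne
      exact ⟨hP, Or.inr ⟨by rw [← h2, Equiv.symm_apply_apply], h2 ▸ hgt⟩⟩
  · rintro ⟨hP, ⟨hk, hgt⟩ | ⟨hk, hgt⟩⟩
    · have h1 : σ p.1 = i := by rw [hk, Equiv.apply_symm_apply]
      exact Or.inl ⟨⟨hP, by rw [h1]; exact hgt⟩, h1⟩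
    · have h2 : σ p.2 = i := by rw [hk, Equiv.apply_symm_apply]
      refine Or.inr ⟨⟨hP, fun hT' => ?_⟩, h2⟩
      have hcon := lt_trans hgt hT'.2
      rw [h2] at hcon
      exact lt_irrefl _ hcon

lemma T0_subset : T0 σ ⊆ Pairs r := Finset.filter_subset _ _

lemma card_sdiff_T0 : ((Pairs r) \ T0 σ).card = inv1 σ := by
  rw [inv1]
  congr 1
  ext p
  simp only [Finset.mem_sdiff, T0, mem_filter, mem_Pairs, Finset.mem_univ, true_and]
  constructor
  · rintro ⟨hP, hnT⟩
    have hlt' : ¬ (σ p.1 < σ p.2) := fun hl => hnT ⟨hP, hl⟩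
    have hne : σ p.2 ≠ σ p.1 := fun h => absurd (σ.injective h) (ne_of_gt hP)
    exact ⟨hP, lt_of_le_of_ne (not_lt.mp hlt') hne⟩
  · rintro ⟨hP, hlt⟩
    exact ⟨hP, fun hT' => absurd (lt_trans hlt hT'.2) (lt_irrefl _)⟩

section Poly
variable {R : Type*} [CommRing R]

noncomputable def dexp (T : Finset (Fin r × Fin r)) : Fin r →₀ ℕ :=
  (∑ p ∈ T, Finsupp.single (σ p.1) 1) + ∑ p ∈ (Pairs r) \ T, Finsupp.single (σ p.2) 1

lemma dexp_apply (T : Finset (Fin r × Fin r)) (i : Fin r) :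
    dexp σ T i = (T.filter (fun p => σ p.1 = i)).card
      + (((Pairs r) \ T).filter (fun p => σ p.2 = i)).card := by
  rw [dexp, Finsupp.add_apply, Finsupp.finset_sum_apply, Finsupp.finset_sum_apply,
    Finset.card_filter, Finset.card_filter]
  congr 1 <;> exact Finset.sum_congr rfl (fun p _ => by rw [Finsupp.single_apply])

noncomputable def delta1 (r : ℕ) : Fin r →₀ ℕ := Finsupp.equivFunOnFinite.symm (fun k : Fin r => r - 1 - (k : ℕ))

lemma delta1_apply (i : Fin r) : delta1 r i = r - 1 - (i : ℕ) := rfl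

lemma dexp_T0 : dexp σ (T0 σ) = delta1 r := by
  ext i
  rw [dexp_apply, delta1_apply, T0_count]

lemma prod_X_monomial {ι : Type*} (s : Finset ι) (g : ι → Fin r) :
    ∏ p ∈ s, (X (g p) : MvPolynomial (Fin r) R)
      = monomial (∑ p ∈ s, Finsupp.single (g p) 1) 1 := by
  induction s using Finset.cons_induction with
  | empty => simp
  | cons a s ha ih =>
    rw [Finset.prod_cons, ih, Finset.sum_cons, X, monomial_mul, one_mul]

lemma coeff_term (c : R) :
    MvPolynomial.coeff (delta1 r) (∏ p ∈ Pairs r, (X (σ p.1) - C c * X (σ p.2)))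
      = (-c) ^ inv1 σ := by
  have hrw : ∀ p : Fin r × Fin r,
      (X (σ p.1) - C c * X (σ p.2) : MvPolynomial (Fin r) R)
        = X (σ p.1) + (C (-c)) * X (σ p.2) := by
    intro p
    rw [map_neg]
    ring
  rw [Finset.prod_congr rfl (fun p _ => hrw p), Finset.prod_add, MvPolynomial.coeff_sum]
  have hterm : ∀ T ∈ (Pairs r).powerset,
      MvPolynomial.coeff (delta1 r)
          ((∏ p ∈ T, (X (σ p.1) : MvPolynomial (Fin r) R))
            * ∏ p ∈ (Pairs r) \ T, (C (-c) * X (σ p.2)))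
        = (-c) ^ (((Pairs r) \ T).card) * (if dexp σ T = delta1 r then 1 else 0) := by
    intro T _
    rw [Finset.prod_mul_distrib, Finset.prod_const, prod_X_monomial, prod_X_monomial,
      ← map_pow, mul_left_comm, monomial_mul, one_mul, MvPolynomial.coeff_C_mul,
      MvPolynomial.coeff_monomial]
    rfl
  rw [Finset.sum_congr rfl hterm]
  rw [Finset.sum_eq_single_of_mem (T0 σ)
    (Finset.mem_powerset.mpr (T0_subset σ))]
  · rw [if_pos (dexp_T0 σ), mul_one, card_sdiff_T0]
  · intro T hT hne
    rw [if_neg, mul_zero]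
    intro hdT
    apply hne
    have hTsub := Finset.mem_powerset.mp hT
    have hclass := classify σ T hTsub (fun i => by
      rw [← dexp_apply, hdT, delta1_apply])
    ext p
    rw [T0, mem_filter]
    constructor
    · intro hpT
      have hpP := hTsub hpT
      exact ⟨hpP, (hclass p hpP).mp hpT⟩
    · rintro ⟨hpP, hlt⟩
      exact (hclass p hpP).mpr hlt

end Poly

section Gen
variable {R : Type*} [CommRing R]

lemma inv1_eq_sum {r : ℕ} (σ : Equiv.Perm (Fin r)) :
    inv1 σ = ∑ a : Fin r, ∑ b : Fin r, if a < b ∧ σ b < σ a then 1 else 0 := by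
  rw [inv1, Finset.card_filter]
  rw [← Finset.univ_product_univ, Finset.sum_product]

noncomputable def phi1 (n : ℕ) (pe : Fin (n+1) × Equiv.Perm (Fin n)) : Equiv.Perm (Fin (n+1)) :=
  ((finSuccEquiv n).trans (pe.2.optionCongr)).trans (finSuccEquiv' pe.1).symm

lemma phi1_zero (n : ℕ) (pe : Fin (n+1) × Equiv.Perm (Fin n)) : phi1 n pe 0 = pe.1 := by
  simp [phi1]

lemma phi1_succ (n : ℕ) (pe : Fin (n+1) × Equiv.Perm (Fin n)) (i : Fin n) :
    phi1 n pe i.succ = pe.1.succAbove (pe.2 i) := by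
  simp [phi1]

lemma card_val_lt (n v : ℕ) (hv : v ≤ n) :
    (Finset.univ.filter (fun y : Fin n => (y : ℕ) < v)).card = v := by
  rw [← Finset.card_range v]
  apply Finset.card_nbij (i := Fin.val)
  · intro y hy; simp at hy ⊢; exact hy
  · intro a ha b hb hab; exact Fin.val_injective hab
  · intro a ha; simp at ha ⊢
    exact ⟨⟨a, lt_of_lt_of_le ha hv⟩, by simp [ha], rfl⟩

lemma inv1_phi1 (n : ℕ) (pe : Fin (n+1) × Equiv.Perm (Fin n)) :
    inv1 (phi1 n pe) = (pe.1 : ℕ) + inv1 pe.2 := by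
  obtain ⟨p, e⟩ := pe
  rw [inv1_eq_sum, inv1_eq_sum]
  rw [Fin.sum_univ_succ]
  have h1 : ∑ b : Fin (n+1), (if (0 : Fin (n+1)) < b ∧ phi1 n (p, e) b < phi1 n (p, e) 0 then 1 else 0) = (p : ℕ) := by
    rw [Fin.sum_univ_succ]
    simp only [phi1_zero, phi1_succ]
    rw [if_neg (by simp)]
    have : ∀ i : Fin n, ((0 : Fin (n+1)) < i.succ ∧ p.succAbove (e i) < p) ↔ ((e i : ℕ) < (p : ℕ)) := by
      intro i
      rw [Fin.succAbove_lt_iff_castSucc_lt]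
      simp [Fin.succ_pos, Fin.lt_iff_val_lt_val]
    rw [zero_add]
    calc ∑ i : Fin n, (if (0:Fin (n+1)) < i.succ ∧ p.succAbove (e i) < p then 1 else 0)
        = ∑ i : Fin n, (if (e i : ℕ) < (p:ℕ) then 1 else 0) := by
          apply Finset.sum_congr rfl; intro i _; rw [if_congr (this i) rfl rfl]
      _ = ∑ y : Fin n, (if (y : ℕ) < (p:ℕ) then 1 else 0) := Equiv.sum_comp e (fun y : Fin n => if (y : ℕ) < (p:ℕ) then (1:ℕ) else 0)
      _ = (p : ℕ) := by
          rw [← Finset.card_filter]; exact card_val_lt n p (by omega)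
  rw [h1]
  congr 1
  apply Finset.sum_congr rfl
  intro i _
  rw [Fin.sum_univ_succ]
  rw [if_neg (by simp [Fin.not_lt_zero])]
  rw [zero_add]
  apply Finset.sum_congr rfl
  intro j _
  apply if_congr _ rfl rfl
  simp only [phi1_succ]
  rw [Fin.succ_lt_succ_iff, Fin.succAbove_lt_succAbove_iff]

lemma phi1_bijective (n : ℕ) : Function.Bijective (phi1 n) := by
  rw [Fintype.bijective_iff_injective_and_card]
  constructor
  · intro ⟨p, e⟩ ⟨p', e'⟩ h
    have h0 : p = p' := by
      have := congrArg (fun σ : Equiv.Perm (Fin (n+1)) => σ 0) h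
      simpa [phi1_zero] using this
    subst h0
    have he : e = e' := by
      ext i
      have := congrArg (fun σ : Equiv.Perm (Fin (n+1)) => σ i.succ) h
      simp only [phi1_succ] at this
      have := Fin.succAbove_right_injective (p := p) this
      exact congrArg Fin.val this
    rw [he]
  · simp [Fintype.card_perm, Nat.factorial_succ]

lemma gen_sum (n : ℕ) (t : R) :
    ∑ σ : Equiv.Perm (Fin n), t ^ inv1 σ
      = ∏ m ∈ Finset.range n, ∑ j ∈ Finset.range (m+1), t ^ j := by
  induction n with
  | zero =>
    rw [Finset.range_zero, Finset.prod_empty]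
    rw [Fintype.sum_eq_single (1 : Equiv.Perm (Fin 0)) (fun σ hσ => absurd (Subsingleton.elim σ 1) hσ)]
    have : inv1 (1 : Equiv.Perm (Fin 0)) = 0 := by
      simp [inv1]
    rw [this, pow_zero]
  | succ n ih =>
    have := Fintype.sum_bijective (phi1 n) (phi1_bijective n)
      (fun pe => t ^ ((pe.1 : ℕ) + inv1 pe.2)) (fun σ => t ^ inv1 σ)
      (fun pe => by rw [inv1_phi1])
    rw [← this, Fintype.sum_prod_type, Finset.prod_range_succ, ← ih]
    rw [mul_comm]
    rw [Finset.sum_mul]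
    rw [← Fin.sum_univ_eq_sum_range (fun i => t ^ i * ∑ σ : Equiv.Perm (Fin n), t ^ inv1 σ) (n+1)]
    apply Finset.sum_congr rfl
    intro p _
    rw [Finset.mul_sum]
    apply Finset.sum_congr rfl
    intro e _
    rw [pow_add]

end Gen

lemma q1_ne_zero : q1 ≠ 0 := RatFunc.X_ne_zero

lemma q1_sq_ne_one : q1 ^ 2 ≠ 1 := by
  intro h
  have key : (Polynomial.X : Polynomial ℚ) ^ 2 - 1 ≠ 0 := by
    intro h'
    have := congrArg (Polynomial.eval 0) h'
    simp at this
  apply key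
  apply RatFunc.algebraMap_injective (K := ℚ)
  rw [map_sub, map_pow, map_one, map_zero, RatFunc.algebraMap_X]
  rw [show (RatFunc.X : RatFunc ℚ) = q1 from rfl, h, sub_self]

lemma qsub_ne : q1 - q1⁻¹ ≠ 0 := by
  intro h
  apply q1_sq_ne_one
  have h1 : q1 = q1⁻¹ := sub_eq_zero.mp h
  calc q1 ^ 2 = q1 * q1 := sq q1
    _ = q1 * q1⁻¹ := by rw [← h1]
    _ = 1 := mul_inv_cancel₀ q1_ne_zero

lemma qinv_sq_ne_one : q1⁻¹ ^ 2 ≠ 1 := by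
  rw [inv_pow, ne_eq, inv_eq_one]
  exact q1_sq_ne_one

lemma qInt_rec (m : ℕ) : qInt1 (m+2) = q1⁻¹ * qInt1 (m+1) + q1 ^ (m+1) := by
  rw [qInt1, qInt1, mul_div_assoc', div_add' _ _ _ qsub_ne]
  congr 1
  ring

lemma per_term (m : ℕ) :
    q1⁻¹ ^ m * qInt1 (m+1) = ∑ j ∈ Finset.range (m+1), (q1⁻¹ ^ 2) ^ j := by
  induction m with
  | zero =>
    simp [qInt1, div_self qsub_ne]
  | succ m ih =>
    rw [geom_sum_succ, ← ih, qInt_rec, mul_add]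
    have hcancel : q1⁻¹ ^ (m+1) * q1 ^ (m+1) = 1 := by
      rw [← mul_pow, inv_mul_cancel₀ q1_ne_zero, one_pow]
    rw [hcancel]
    ring

lemma part2 (r : ℕ) :
    ∑ σ : Equiv.Perm (Fin r), q1⁻¹ ^ (2 * inv1 σ) = q1⁻¹ ^ (r * (r - 1) / 2) * qFact1 r := by
  have h1 : ∀ σ : Equiv.Perm (Fin r), q1⁻¹ ^ (2 * inv1 σ) = (q1⁻¹ ^ 2) ^ inv1 σ :=
    fun σ => pow_mul _ _ _
  rw [Finset.sum_congr rfl (fun σ _ => h1 σ), gen_sum]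
  have h2 : qFact1 r = ∏ i ∈ Finset.range r, qInt1 (i + 1) := by
    rw [qFact1, ← Finset.Ico_add_one_right_eq_Icc, Finset.prod_Ico_eq_prod_range]
    simp [add_comm]
  have h3 : q1⁻¹ ^ (r * (r - 1) / 2) = ∏ i ∈ Finset.range r, q1⁻¹ ^ i := by
    rw [Finset.prod_pow_eq_pow_sum]
    congr 1
    have := Finset.sum_range_id_mul_two r
    omega
  rw [h2, h3, ← Finset.prod_mul_distrib]
  exact Finset.prod_congr rfl (fun i _ => (per_term i).symm)


lemma prod_pairs {M : Type*} [CommMonoid M] {r : ℕ} (f : Fin r → Fin r → M) :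
    ∏ k : Fin r, ∏ s ∈ Finset.univ.filter (fun s => k < s), f k s
      = ∏ p ∈ Pairs r, f p.1 p.2 := by
  rw [Pairs, Finset.prod_filter, ← Finset.univ_product_univ, Finset.prod_product]
  exact Finset.prod_congr rfl (fun k _ => Finset.prod_filter _ _)

theorem statement1 (r : ℕ) (hr : 1 ≤ r) :
    MvPolynomial.coeff (Finsupp.equivFunOnFinite.symm (fun k : Fin r => r - 1 - (k : ℕ)))
      (∑ σ : Equiv.Perm (Fin r),
        (-1 : MvPolynomial (Fin r) K1) ^ inv1 σ *
          ∏ k : Fin r, ∏ s ∈ Finset.univ.filter (fun s => k < s),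
            (X (σ k) - C (q1⁻¹ ^ 2) * X (σ s)))
      = ∑ σ : Equiv.Perm (Fin r), q1⁻¹ ^ (2 * inv1 σ)
    ∧ ∑ σ : Equiv.Perm (Fin r), q1⁻¹ ^ (2 * inv1 σ)
      = q1⁻¹ ^ (r * (r - 1) / 2) * qFact1 r := by
  constructor
  · show MvPolynomial.coeff (delta1 r) _ = _
    rw [MvPolynomial.coeff_sum]
    apply Finset.sum_congr rfl
    intro σ _
    rw [prod_pairs (fun k s => (X (σ k) - C (q1⁻¹ ^ 2) * X (σ s) : MvPolynomial (Fin r) K1))]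
    rw [show ((-1 : MvPolynomial (Fin r) K1)) = C (-1) by rw [map_neg, map_one],
      ← map_pow, MvPolynomial.coeff_C_mul, coeff_term σ (q1⁻¹ ^ 2)]
    rw [← mul_pow, neg_one_mul, neg_neg, ← pow_mul]
  · exact part2 r
end

section
/- Let R be a commutative ring and let G ∈ R[[z_1^{±1},...,z_r^{±1}]] be a formal Laurent series invariant under the action of the symmetric group S_r permuting the variables. Then for every integer n, the coefficient of (z_1 z_2 ⋯ z_r)^n in ∏_{j<k}(z_j - z_k)^2 · G is divisible by r! in R (i.e., equals r! times an element of R). -/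
open MvPolynomial Finset

/-- The squared Vandermonde polynomial ∏_{j<k}(z_j - z_k)^2 over ℤ. -/
noncomputable def vand2 (r : ℕ) : MvPolynomial (Fin r) ℤ :=
  ∏ j : Fin r, ∏ k ∈ Finset.univ.filter (fun k => j < k), (X j - X k) ^ 2

section aux

variable (r : ℕ)

/-- exponent vector of the monomial of `σ` in the Leibniz expansion of the
Vandermonde determinant -/
noncomputable def vandExp (σ : Equiv.Perm (Fin r)) : Fin r →₀ ℕ :=
  ∑ j : Fin r, Finsupp.single j ((σ.symm j : Fin r) : ℕ)

lemma vandExp_apply (σ : Equiv.Perm (Fin r)) (i : Fin r) :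
    vandExp r σ i = ((σ.symm i : Fin r) : ℕ) := by
  classical
  simp [vandExp, Finsupp.finset_sum_apply, Finsupp.single_apply]

lemma prod_X_pow (σ : Equiv.Perm (Fin r)) :
    (∏ i : Fin r, (X (σ i) : MvPolynomial (Fin r) ℤ) ^ (i : ℕ)) =
      monomial (vandExp r σ) 1 := by
  have h1 : (∏ i : Fin r, (X (σ i) : MvPolynomial (Fin r) ℤ) ^ (i : ℕ)) =
      ∏ j : Fin r, (X j : MvPolynomial (Fin r) ℤ) ^ ((σ.symm j : Fin r) : ℕ) := by
    rw [← Equiv.prod_comp σ (fun j => (X j : MvPolynomial (Fin r) ℤ) ^ ((σ.symm j : Fin r) : ℕ))]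
    simp
  rw [h1, vandExp, monomial_sum_one]
  exact Finset.prod_congr rfl fun j _ => X_pow_eq_monomial

lemma vand_det :
    (Matrix.vandermonde (fun i : Fin r => (X i : MvPolynomial (Fin r) ℤ))).det =
      ∑ σ : Equiv.Perm (Fin r), monomial (vandExp r σ) ((Equiv.Perm.sign σ : ℤ)) := by
  rw [Matrix.det_apply']
  refine Finset.sum_congr rfl fun σ _ => ?_
  have : (∏ i : Fin r, Matrix.vandermonde (fun i : Fin r => (X i : MvPolynomial (Fin r) ℤ)) (σ i) i)
      = monomial (vandExp r σ) 1 := by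
    rw [← prod_X_pow r σ]
    exact Finset.prod_congr rfl fun i _ => by rw [Matrix.vandermonde_apply]
  rw [this]
  have hc : ((Equiv.Perm.sign σ : ℤ) : MvPolynomial (Fin r) ℤ) = C ((Equiv.Perm.sign σ : ℤ)) :=
    (map_intCast (C : ℤ →+* MvPolynomial (Fin r) ℤ) _).symm
  rw [hc, C_mul_monomial, mul_one]

lemma vand2_eq :
    vand2 r = ∑ σ : Equiv.Perm (Fin r), ∑ τ : Equiv.Perm (Fin r),
      monomial (vandExp r σ + vandExp r τ)
        ((Equiv.Perm.sign σ : ℤ) * (Equiv.Perm.sign τ : ℤ)) := by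
  classical
  have h1 : vand2 r =
      (Matrix.vandermonde (fun i : Fin r => (X i : MvPolynomial (Fin r) ℤ))).det ^ 2 := by
    rw [Matrix.det_vandermonde]
    rw [vand2]
    rw [← Finset.prod_pow]
    refine Finset.prod_congr rfl fun j _ => ?_
    rw [← Finset.prod_pow]
    rw [Finset.filter_lt_eq_Ioi]
    refine Finset.prod_congr rfl fun k _ => ?_
    rw [← neg_sub (X k) (X j), neg_sq]
  rw [h1, sq, vand_det, Finset.sum_mul_sum]
  refine Finset.sum_congr rfl fun σ _ => Finset.sum_congr rfl fun τ _ => ?_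
  rw [monomial_mul]

end aux

/-- A formal Laurent series in z_1,...,z_r with coefficients in `R` is encoded by its
coefficient function `G : (Fin r → ℤ) → R`.  Symmetry means the coefficients are
invariant under permutation of the variables.  The coefficient of `(z_1⋯z_r)^n` in
`vand2 r * G` is the (finite) sum over the support of `vand2 r` of
`(coeff d) * G(n·𝟙 - d)`; this coefficient is divisible by `r!` in `R`. -/
theorem statement4 (r : ℕ) (R : Type*) [CommRing R] (G : (Fin r → ℤ) → R)
    (hsym : ∀ (σ : Equiv.Perm (Fin r)) (v : Fin r → ℤ), G (v ∘ σ) = G v) (n : ℤ) :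
    ∃ c : R,
      (∑ d ∈ (vand2 r).support, (((vand2 r).coeff d : ℤ) : R) *
          G (fun i => n - (d i : ℤ))) = (r.factorial : R) * c := by
  classical
  set b : (Fin r →₀ ℕ) → ℤ → R := fun d c => (c : R) * G (fun i => n - (d i : ℤ)) with hb
  have hb0 : ∀ d, b d 0 = 0 := by intro d; simp [hb]
  have hbadd : ∀ d c₁ c₂, b d (c₁ + c₂) = b d c₁ + b d c₂ := by
    intro d c₁ c₂; simp [hb, add_mul]
  let Φ : MvPolynomial (Fin r) ℤ →+ R :=
    { toFun := fun P => (AddMonoidAlgebra.coeff P).sum b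
      map_zero' := Finsupp.sum_zero_index
      map_add' := fun P Q => Finsupp.sum_add_index' hb0 hbadd }
  have hΦmon : ∀ (m : Fin r →₀ ℕ) (c : ℤ), Φ (monomial m c) = b m c := fun m c =>
    sum_monomial_eq (hb0 m)
  -- the term associated to a single permutation
  set H : Equiv.Perm (Fin r) → R := fun π =>
    ((Equiv.Perm.sign π : ℤ) : R) *
      G (fun i => n - ((i : Fin r) : ℕ) - ((π.symm i : Fin r) : ℕ)) with hH
  have key : ∀ (σ τ : Equiv.Perm (Fin r)),
      b (vandExp r σ + vandExp r (σ * τ))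
        ((Equiv.Perm.sign σ : ℤ) * (Equiv.Perm.sign (σ * τ) : ℤ)) = H τ := by
    intro σ τ
    have hsign : (Equiv.Perm.sign σ : ℤ) * (Equiv.Perm.sign (σ * τ) : ℤ)
        = (Equiv.Perm.sign τ : ℤ) := by
      rw [map_mul]
      push_cast
      rw [← mul_assoc]
      norm_cast
      rw [Int.units_mul_self, one_mul]
    have hG : G (fun i => n - (((vandExp r σ + vandExp r (σ * τ)) i : ℕ) : ℤ))
        = G (fun i => n - ((i : Fin r) : ℕ) - ((τ.symm i : Fin r) : ℕ)) := by
      have := hsym σ⁻¹ (fun i => n - ((i : Fin r) : ℕ) - ((τ.symm i : Fin r) : ℕ))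
      rw [← this]
      congr 1
      funext i
      have h1 : (vandExp r σ + vandExp r (σ * τ)) i
          = ((σ.symm i : Fin r) : ℕ) + ((τ.symm (σ.symm i) : Fin r) : ℕ) := by
        rw [Finsupp.add_apply, vandExp_apply, vandExp_apply]
        rfl
      simp only [Function.comp_apply, h1]
      push_cast
      ring_nf
      rfl
    rw [hb]
    simp only [hsign]
    rw [hG, hH]
  have hsum : (∑ d ∈ (vand2 r).support, (((vand2 r).coeff d : ℤ) : R) *
      G (fun i => n - (d i : ℤ))) = Φ (vand2 r) := by
    show _ = (AddMonoidAlgebra.coeff (vand2 r)).sum b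
    rw [sum_def]
  refine ⟨∑ π : Equiv.Perm (Fin r), H π, ?_⟩
  rw [hsum, vand2_eq, map_sum]
  have hinner : ∀ σ : Equiv.Perm (Fin r),
      Φ (∑ τ : Equiv.Perm (Fin r), monomial (vandExp r σ + vandExp r τ)
        ((Equiv.Perm.sign σ : ℤ) * (Equiv.Perm.sign τ : ℤ)))
      = ∑ π : Equiv.Perm (Fin r), H π := by
    intro σ
    rw [map_sum]
    have := Equiv.sum_comp (Equiv.mulLeft σ)
      (fun τ => Φ (monomial (vandExp r σ + vandExp r τ)
        ((Equiv.Perm.sign σ : ℤ) * (Equiv.Perm.sign τ : ℤ))))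
    rw [← this]
    refine Finset.sum_congr rfl fun π _ => ?_
    simp only [Equiv.coe_mulLeft]
    rw [hΦmon, key]
  rw [Finset.sum_congr rfl fun σ _ => hinner σ, Finset.sum_const]
  simp [Fintype.card_perm, mul_comm, nsmul_eq_mul]
end

section
/- For the Cartan matrix A of type D_n (n ≥ 4), the determinant of the matrix [A] with entries [a_{ij}]_q equals [2]_q (q^{n-1} + q^{-(n-1)}) in ℤ[q, q^{-1}]. -/
open Finset

noncomputable abbrev K6 : Type := RatFunc ℚ

noncomputable def q6 : K6 := RatFunc.X

noncomputable def qInt6 (m : ℤ) : K6 := (q6 ^ m - q6 ^ (-m)) / (q6 - q6⁻¹)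

/-- The Cartan matrix of type D_n (0-indexed nodes 0,…,n-1: a path 0—1—⋯—(n-2)
together with the extra edge (n-3)—(n-1)). -/
def cartanD (n : ℕ) : Matrix (Fin n) (Fin n) ℤ := fun i j =>
  if i = j then 2
  else if ((i : ℕ) + 1 = j ∧ (j : ℕ) ≤ n - 2) ∨ ((j : ℕ) + 1 = i ∧ (i : ℕ) ≤ n - 2) ∨
      ((i : ℕ) = n - 3 ∧ (j : ℕ) = n - 1) ∨ ((i : ℕ) = n - 1 ∧ (j : ℕ) = n - 3) then -1
  else 0

lemma hq0 : q6 ≠ 0 := RatFunc.X_ne_zero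

lemma hd0 : q6 - q6⁻¹ ≠ 0 := by
  intro h
  have h2 : q6 * q6 = 1 := by
    have := sub_eq_zero.mp h
    nth_rewrite 2 [this]
    rw [mul_inv_cancel₀ hq0]
  have : (Polynomial.X * Polynomial.X : Polynomial ℚ) = 1 := by
    apply RatFunc.algebraMap_injective
    simpa [q6, RatFunc.algebraMap_X] using h2
  simpa using congrArg Polynomial.natDegree this

lemma qInt6_two' : qInt6 2 = q6 + q6⁻¹ := by
  rw [qInt6, div_eq_iff hd0, zpow_neg, show ((2:ℤ)) = ((2:ℕ):ℤ) from rfl, zpow_natCast]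
  field_simp
  ring

lemma qInt6_neg_one : qInt6 (-1) = -1 := by
  rw [qInt6, div_eq_iff hd0]
  field_simp
  rw [neg_neg, zpow_one]
  field_simp
  ring

lemma qInt6_zero : qInt6 0 = 0 := by
  simp [qInt6]

lemma shiftD (m : ℕ) (hm : 4 ≤ m) (i j : Fin m) :
    cartanD (m+1) i.succ j.succ = cartanD m i j := by
  have hi := i.isLt; have hj := j.isLt
  simp only [cartanD, Fin.ext_iff, Fin.val_succ]
  split_ifs <;> first | rfl | omega | (exfalso; simp_all <;> omega)

lemma row0 (m : ℕ) (hm : 4 ≤ m) (j : Fin m) :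
    cartanD (m+2) 0 j.succ.succ = 0 := by
  have hj := j.isLt
  simp only [cartanD, Fin.ext_iff, Fin.val_succ, Fin.val_zero]
  split_ifs <;> first | rfl | omega | (exfalso; simp_all <;> omega)

lemma row01 (m : ℕ) (hm : 4 ≤ m) :
    cartanD (m+2) 0 1 = -1 := by
  simp only [cartanD, Fin.ext_iff, Fin.val_zero, Fin.val_one]
  split_ifs <;> first | rfl | omega | (exfalso; simp_all <;> omega)

lemma row10 (m : ℕ) (hm : 4 ≤ m) :
    cartanD (m+2) 1 0 = -1 := by
  simp only [cartanD, Fin.ext_iff, Fin.val_zero, Fin.val_one]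
  split_ifs <;> first | rfl | omega | (exfalso; simp_all <;> omega)

lemma col0 (m : ℕ) (hm : 4 ≤ m) (i : Fin m) :
    cartanD (m+2) i.succ.succ 0 = 0 := by
  have hi := i.isLt
  simp only [cartanD, Fin.ext_iff, Fin.val_succ, Fin.val_zero]
  split_ifs <;> first | rfl | omega | (exfalso; simp_all <;> omega)

lemma diagD (n : ℕ) (i : Fin n) : cartanD n i i = 2 := by simp [cartanD]

noncomputable def Mq (n : ℕ) : Matrix (Fin n) (Fin n) K6 := fun i j => qInt6 (cartanD n i j)

set_option maxHeartbeats 1000000 in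
lemma recD (m : ℕ) (hm : 4 ≤ m) :
    (Mq (m+2)).det = qInt6 2 * (Mq (m+1)).det - (Mq m).det := by
  have hm1 : 4 ≤ m + 1 := by omega
  have hminor0 : (Mq (m+2)).submatrix Fin.succ (Fin.succAbove 0) = Mq (m+1) := by
    ext i j
    simp only [Matrix.submatrix_apply, Fin.succAbove_zero, Mq]
    rw [shiftD (m+1) hm1]
  have hsa1 : ((Fin.succ 0 : Fin (m+2)).succAbove 0) = 0 := by
    rw [Fin.succAbove_of_castSucc_lt]
    · rfl
    · simp [Fin.lt_def]
  have hsa2 : ∀ j : Fin m, ((Fin.succ 0 : Fin (m+2)).succAbove j.succ) = j.succ.succ := by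
    intro j
    rw [Fin.succAbove_of_le_castSucc]
    simp [Fin.le_def]
  set A1 : Matrix (Fin (m+1)) (Fin (m+1)) K6 :=
    (Mq (m+2)).submatrix Fin.succ (Fin.succ 0).succAbove with hA1
  have hB : A1.submatrix (Fin.succAbove 0) Fin.succ = Mq m := by
    ext i j
    simp only [hA1, Matrix.submatrix_apply, Fin.succAbove_zero, hsa2, Mq]
    rw [shiftD (m+1) hm1 i.succ j.succ, shiftD m hm i j]
  have hdetA1 : A1.det = - (Mq m).det := by
    rw [Matrix.det_succ_column_zero, Fin.sum_univ_succ]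
    have hz : ∀ i : Fin m, (-1:K6) ^ ((i.succ : Fin (m+1)) : ℕ) * A1 i.succ 0 *
        (A1.submatrix i.succ.succAbove Fin.succ).det = 0 := by
      intro i
      have : A1 i.succ 0 = 0 := by
        simp only [hA1, Matrix.submatrix_apply, hsa1, Mq]
        rw [show ((i.succ.succ : Fin (m+2))) = (i.succ : Fin (m+1)).succ from rfl] at *
        rw [show (Fin.succ (i.succ) : Fin (m+2)) = ((i.succ : Fin (m+1)).succ) from rfl]
        rw [col0 m hm i, qInt6_zero]
      rw [this]; ring
    rw [Finset.sum_eq_zero (fun i _ => hz i), add_zero]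
    have hA100 : A1 0 0 = -1 := by
      simp only [hA1, Matrix.submatrix_apply, Mq]
      rw [hsa1, Fin.succ_zero_eq_one', row10 m hm, qInt6_neg_one]
    rw [hA100, hB]
    simp
  have hdet : (Mq (m+2)).det =
      ∑ j : Fin (m+1+1), (-1) ^ (j : ℕ) * Mq (m+2) 0 j *
        ((Mq (m+2)).submatrix Fin.succ j.succAbove).det :=
    Matrix.det_succ_row_zero (Mq (m+2))
  rw [Fin.sum_univ_succ, Fin.sum_univ_succ] at hdet
  have hz2 : ∀ j : Fin m, (-1:K6) ^ ((j.succ.succ : Fin (m+2)) : ℕ) * Mq (m+2) 0 j.succ.succ *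
      ((Mq (m+2)).submatrix Fin.succ j.succ.succ.succAbove).det = 0 := by
    intro j
    have : Mq (m+2) 0 j.succ.succ = 0 := by
      simp only [Mq]; rw [row0 m hm j, qInt6_zero]
    rw [this]; ring
  rw [Finset.sum_eq_zero (fun j _ => hz2 j), add_zero] at hdet
  have h00 : Mq (m+2) 0 0 = qInt6 2 := by simp only [Mq]; rw [diagD]
  have h01 : Mq (m+2) 0 (Fin.succ 0) = -1 := by
    simp only [Mq, Fin.succ_zero_eq_one']; rw [row01 m hm, qInt6_neg_one]
  rw [hdet, h00, h01, hminor0, ← hA1, hdetA1]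
  simp [Fin.val_succ]
  ring

set_option maxHeartbeats 1000000 in
lemma base4 : (Mq 4).det = qInt6 2 * (q6 ^ 3 + q6⁻¹ ^ 3) := by
  have h4 : Mq 4 = !![qInt6 2, -1, 0, 0; -1, qInt6 2, -1, -1; 0, -1, qInt6 2, 0; 0, -1, 0, qInt6 2] := by
    ext i j
    fin_cases i <;> fin_cases j <;>
      simp [Mq, cartanD, qInt6_neg_one, qInt6_zero, Matrix.vecHead, Matrix.vecTail]
  rw [h4, qInt6_two']
  rw [Matrix.det_succ_row_zero]
  simp [Fin.sum_univ_succ, Matrix.det_fin_three, Fin.succAbove]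
  have hu : q6 * q6⁻¹ = 1 := mul_inv_cancel₀ hq0
  linear_combination (3*(q6+q6⁻¹)^2) * hu

set_option maxHeartbeats 1000000 in
lemma base5 : (Mq 5).det = qInt6 2 * (q6 ^ 4 + q6⁻¹ ^ 4) := by
  have h5 : Mq 5 = !![qInt6 2, -1, 0, 0, 0; -1, qInt6 2, -1, 0, 0; 0, -1, qInt6 2, -1, -1;
      0, 0, -1, qInt6 2, 0; 0, 0, -1, 0, qInt6 2] := by
    ext i j
    fin_cases i <;> fin_cases j <;>
      simp [Mq, cartanD, qInt6_neg_one, qInt6_zero, Matrix.vecHead, Matrix.vecTail]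
  rw [h5, qInt6_two']
  rw [Matrix.det_succ_row_zero]
  simp [Fin.sum_univ_succ, Matrix.det_succ_row_zero (n := 3), Matrix.det_fin_three, Fin.succAbove]
  have hu : q6 * q6⁻¹ = 1 := mul_inv_cancel₀ hq0
  linear_combination (-2*q6⁻¹ + 4*q6⁻¹^3 - 2*q6 + 10*q6*q6⁻¹^2 + 10*q6^2*q6⁻¹ + 4*q6^3) * hu

lemma grec (k : ℕ) :
    q6 ^ (k+2) + q6⁻¹ ^ (k+2) =
      (q6+q6⁻¹) * (q6 ^ (k+1) + q6⁻¹ ^ (k+1)) - (q6 ^ k + q6⁻¹ ^ k) := by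
  have hu : q6 * q6⁻¹ = 1 := mul_inv_cancel₀ hq0
  linear_combination (-(q6 ^ k) - q6⁻¹ ^ k) * hu

lemma mainD : ∀ n : ℕ, 4 ≤ n → (Mq n).det = qInt6 2 * (q6 ^ (n - 1 : ℕ) + q6⁻¹ ^ (n - 1 : ℕ)) := by
  intro n
  induction n using Nat.strong_induction_on with
  | _ n ih =>
    intro hn
    by_cases h4 : n = 4
    · subst h4; exact base4
    by_cases h5 : n = 5
    · subst h5; exact base5
    obtain ⟨k, rfl⟩ : ∃ k, n = k + 3 := ⟨n - 3, by omega⟩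
    have hk : 4 ≤ k + 1 := by omega
    rw [show k + 3 = (k+1) + 2 from rfl, recD (k+1) hk,
      ih (k+2) (by omega) (by omega), ih (k+1) (by omega) (by omega)]
    rw [show (k+1+2) - 1 = k + 2 from by omega, show (k+2) - 1 = k + 1 from by omega,
      show (k+1) - 1 = k from by omega, grec k, qInt6_two']
    ring

/-- det [A] = [2](q^{n-1} + q^{-(n-1)}) for the q-deformed Cartan matrix of type D_n. -/
theorem statement6 (n : ℕ) (hn : 4 ≤ n) :
    Matrix.det (fun i j => qInt6 (cartanD n i j)) =
      qInt6 2 * (q6 ^ (n - 1 : ℕ) + q6⁻¹ ^ (n - 1 : ℕ)) := by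
  exact mainD n hn
end
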